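/- Every countably presentable flat module over an associative ring A is the colimit of a countable directed chain of finitely generated free A-modules. -/

import Mathlib

universe u

noncomputable section RTensorPrelude
variable (A : Type u) [Ring A]

/-- Relations defining the balanced tensor product `P ⊗_A M` of a right `A`-module `P`
and a left `A`-module `M`, inside `P ⊗_ℤ M`. -/
def TensorRel (P : Type u) [AddCommGroup P] [Module Aᵐᵒᵖ P]
    (M : Type u) [AddCommGroup M] [Module A M] :
    AddSubgroup (TensorProduct ℤ P M) :=
  AddSubgroup.closure
    {x | ∃ (a : A) (p : P) (m : M),
      x = (MulOpposite.op a • p) ⊗ₜ[ℤ] m - p ⊗ₜ[ℤ] (a • m)}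

/-- The balanced tensor product `P ⊗_A M` over a (possibly noncommutative) ring `A`. -/
def RTensor (P : Type u) [AddCommGroup P] [Module Aᵐᵒᵖ P]
    (M : Type u) [AddCommGroup M] [Module A M] : Type u :=
  TensorProduct ℤ P M ⧸ TensorRel A P M

variable (P : Type u) [AddCommGroup P] [Module Aᵐᵒᵖ P]
  (Q : Type u) [AddCommGroup Q] [Module Aᵐᵒᵖ Q]
  (M : Type u) [AddCommGroup M] [Module A M]

instance : AddCommGroup (RTensor A P M) :=
  inferInstanceAs (AddCommGroup (TensorProduct ℤ P M ⧸ TensorRel A P M))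

/-- The image of a simple tensor `p ⊗ m` in `P ⊗_A M`. -/
def RTensor.mk (p : P) (m : M) : RTensor A P M :=
  QuotientAddGroup.mk (p ⊗ₜ[ℤ] m)

variable {A P Q M}

theorem RTensor.mk_rel (a : A) (p : P) (m : M) :
    RTensor.mk A P M (MulOpposite.op a • p) m = RTensor.mk A P M p (a • m) :=
  QuotientAddGroup.eq_iff_sub_mem.mpr (AddSubgroup.subset_closure ⟨a, p, m, rfl⟩)

/-- Functoriality of the balanced tensor product in the right-module variable. -/
def RTensor.map (g : P →ₗ[Aᵐᵒᵖ] Q) : RTensor A P M →+ RTensor A Q M :=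
  QuotientAddGroup.lift _
    ((QuotientAddGroup.mk' (TensorRel A Q M)).comp
      (LinearMap.rTensor M g.toAddMonoidHom.toIntLinearMap).toAddMonoidHom)
    ((AddSubgroup.closure_le _).2 (by
      rintro x ⟨a, p, m, rfl⟩
      refine (AddMonoidHom.mem_ker (f := ((QuotientAddGroup.mk' (TensorRel A Q M)).comp
        (LinearMap.rTensor M g.toAddMonoidHom.toIntLinearMap).toAddMonoidHom))).2 ?_
      rw [map_sub, sub_eq_zero]
      show RTensor.mk A Q M (g.toAddMonoidHom.toIntLinearMap (MulOpposite.op a • p)) m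
        = RTensor.mk A Q M (g.toAddMonoidHom.toIntLinearMap p) (a • m)
      show RTensor.mk A Q M (g (MulOpposite.op a • p)) m = RTensor.mk A Q M (g p) (a • m)
      rw [g.map_smul, RTensor.mk_rel]))

theorem RTensor.map_mk (g : P →ₗ[Aᵐᵒᵖ] Q) (p : P) (m : M) :
    RTensor.map g (RTensor.mk A P M p m) = RTensor.mk A Q M (g p) m := rfl

end RTensorPrelude

/-- A left module `M` over a ring `A` is flat if the functor `(- ⊗_A M)` preserves
injectivity of morphisms of right `A`-modules (equivalently, `(- ⊗_A M)` is exact). -/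
def IsFlatModule (A : Type u) [Ring A] (M : Type u) [AddCommGroup M] [Module A M] : Prop :=
  ∀ (P Q : Type u) [AddCommGroup P] [Module Aᵐᵒᵖ P] [AddCommGroup Q] [Module Aᵐᵒᵖ Q]
    (g : P →ₗ[Aᵐᵒᵖ] Q), Function.Injective g →
      Function.Injective (RTensor.map (M := M) g)

/-- A left `A`-module is countably presentable if it is the cokernel of a morphism
of free `A`-modules with (at most) countably many generators. -/
def CountablyPresentable (A : Type u) [Ring A] (M : Type u) [AddCommGroup M] [Module A M] :
    Prop :=
  ∃ f : (ℕ →₀ A) →ₗ[A] (ℕ →₀ A),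
    Nonempty ((((ℕ →₀ A) ⧸ LinearMap.range f)) ≃ₗ[A] M)



noncomputable section AuxRT
variable {A : Type u} [Ring A]
variable {P : Type u} [AddCommGroup P] [Module Aᵐᵒᵖ P]
  {Q : Type u} [AddCommGroup Q] [Module Aᵐᵒᵖ Q]
  {M : Type u} [AddCommGroup M] [Module A M]

theorem RTensor.mk_add_right (p : P) (m m' : M) :
    RTensor.mk A P M p (m + m') = RTensor.mk A P M p m + RTensor.mk A P M p m' := by
  show QuotientAddGroup.mk _ = QuotientAddGroup.mk _ + QuotientAddGroup.mk _
  rw [TensorProduct.tmul_add]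
  rfl

theorem RTensor.mk_add_left (p p' : P) (m : M) :
    RTensor.mk A P M (p + p') m = RTensor.mk A P M p m + RTensor.mk A P M p' m := by
  show QuotientAddGroup.mk _ = QuotientAddGroup.mk _ + QuotientAddGroup.mk _
  rw [TensorProduct.add_tmul]
  rfl

theorem RTensor.hom_ext {T : Type*} [AddCommGroup T] {f₁ f₂ : RTensor A P M →+ T}
    (h : ∀ p m, f₁ (RTensor.mk A P M p m) = f₂ (RTensor.mk A P M p m)) : f₁ = f₂ := by
  ext t
  obtain ⟨x, rfl⟩ := QuotientAddGroup.mk'_surjective (TensorRel A P M) t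
  induction x using TensorProduct.induction_on with
  | zero => simp [map_zero]; exact (map_zero f₁).trans (map_zero f₂).symm
  | tmul p m => exact h p m
  | add x y hx hy =>
      have : ∀ (g : RTensor A P M →+ T) (x y : TensorProduct ℤ P M),
          g (QuotientAddGroup.mk' _ (x + y)) = g (QuotientAddGroup.mk' _ x) +
            g (QuotientAddGroup.mk' _ y) := by
        intro g x y; rw [map_add]; exact map_add g _ _
      rw [this f₁, this f₂, hx, hy]

theorem RTensor.zbal {T : Type u} [AddCommGroup T] (B : P →+ M →+ T) :
    ∀ (z : ℤ) (p : P) (m : M), B (z • p) m = B p (z • m) := fun z p m => by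
  rw [map_zsmul B z p, AddMonoidHom.smul_apply, map_zsmul]

/-- Lift a balanced biadditive map to the balanced tensor product. -/
def RTensor.lift {T : Type u} [AddCommGroup T] (B : P →+ M →+ T)
    (hB : ∀ (a : A) (p : P) (m : M), B (MulOpposite.op a • p) m = B p (a • m)) :
    RTensor A P M →+ T :=
  QuotientAddGroup.lift (TensorRel A P M)
    (TensorProduct.liftAddHom B (RTensor.zbal B))
    ((AddSubgroup.closure_le _).2 (by
      rintro x ⟨a, p, m, rfl⟩
      simp only [SetLike.mem_coe, AddMonoidHom.mem_ker, map_sub,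
        TensorProduct.liftAddHom_tmul, hB, sub_self]))

theorem RTensor.lift_mk {T : Type u} [AddCommGroup T] (B : P →+ M →+ T)
    (hB : ∀ (a : A) (p : P) (m : M), B (MulOpposite.op a • p) m = B p (a • m))
    (p : P) (m : M) : RTensor.lift B hB (RTensor.mk A P M p m) = B p m :=
  TensorProduct.liftAddHom_tmul B (RTensor.zbal B) p m

theorem RTensor.map_comp_apply (g₁ : P →ₗ[Aᵐᵒᵖ] Q) {Q' : Type u} [AddCommGroup Q']
    [Module Aᵐᵒᵖ Q'] (g₂ : Q →ₗ[Aᵐᵒᵖ] Q') (t : RTensor A P M) :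
    RTensor.map (M := M) (g₂.comp g₁) t =
      RTensor.map (M := M) g₂ (RTensor.map (M := M) g₁ t) := by
  have := RTensor.hom_ext (M := M)
    (f₁ := RTensor.map (M := M) (g₂.comp g₁))
    (f₂ := (RTensor.map (M := M) g₂).comp (RTensor.map (M := M) g₁))
    (by intro p m; simp [RTensor.map_mk])
  exact congrArg (fun f => f t) this

theorem RTensor.exists_sum (t : RTensor A P M) :
    ∃ (m : ℕ) (p : Fin m → P) (y : Fin m → M),
      t = ∑ j, RTensor.mk A P M (p j) (y j) := by
  obtain ⟨x, rfl⟩ := QuotientAddGroup.mk'_surjective (TensorRel A P M) t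
  induction x using TensorProduct.induction_on with
  | zero => exact ⟨0, Fin.elim0, Fin.elim0, by simp; rfl⟩
  | tmul p m => exact ⟨1, fun _ => p, fun _ => m, by simp; rfl⟩
  | add x y hx hy =>
      obtain ⟨m₁, p₁, y₁, h₁⟩ := hx
      obtain ⟨m₂, p₂, y₂, h₂⟩ := hy
      refine ⟨m₁ + m₂, Fin.append p₁ p₂, Fin.append y₁ y₂, ?_⟩
      have : (QuotientAddGroup.mk' (TensorRel A P M)) (x + y)
          = QuotientAddGroup.mk' _ x + QuotientAddGroup.mk' _ y := map_add _ _ _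
      rw [this, h₁, h₂, Fin.sum_univ_add]
      simp [Fin.append_left, Fin.append_right]; rfl

end AuxRT

noncomputable section AuxExact
variable {A : Type u} [Ring A]
variable {P : Type u} [AddCommGroup P] [Module Aᵐᵒᵖ P]
  {Q : Type u} [AddCommGroup Q] [Module Aᵐᵒᵖ Q]
  {M : Type u} [AddCommGroup M] [Module A M]

theorem RTensor.mk_zero_right (p : P) : RTensor.mk A P M p 0 = 0 := by
  show QuotientAddGroup.mk _ = 0
  rw [TensorProduct.tmul_zero]
  rfl

/-- The additive hom `m ↦ p ⊗ m`. -/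
def RTensor.mkHom (p : P) : M →+ RTensor A P M :=
  AddMonoidHom.mk' (fun m => RTensor.mk A P M p m) (RTensor.mk_add_right p)

theorem RTensor.exact (g : P →ₗ[Aᵐᵒᵖ] Q) (hg : Function.Surjective g)
    (t : RTensor A P M) (ht : RTensor.map (M := M) g t = 0) :
    ∃ s : RTensor A (↥(LinearMap.ker g)) M,
      RTensor.map (M := M) (LinearMap.ker g).subtype s = t := by
  set K := LinearMap.ker g with hK
  set R : AddSubgroup (RTensor A P M) := (RTensor.map (M := M) K.subtype).range with hR
  have key : ∀ (p p' : P) (m : M), g p = g p' →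
      QuotientAddGroup.mk' R (RTensor.mk A P M p m) =
        QuotientAddGroup.mk' R (RTensor.mk A P M p' m) := by
    intro p p' m hpp
    have hk : p - p' ∈ K := by
      simp [hK, LinearMap.mem_ker, map_sub, hpp]
    have h1 : RTensor.mk A P M p m =
        RTensor.mk A P M p' m + RTensor.mk A P M (p - p') m := by
      rw [← RTensor.mk_add_left, add_sub_cancel]
    have h2 : RTensor.mk A P M (p - p') m ∈ R := by
      refine ⟨RTensor.mk A (↥K) M ⟨p - p', hk⟩ m, ?_⟩
      rw [RTensor.map_mk]; rfl
    rw [h1, map_add]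
    have h3 : QuotientAddGroup.mk' R (RTensor.mk A P M (p - p') m) = 0 :=
      (QuotientAddGroup.eq_zero_iff _).2 h2
    rw [h3, add_zero]
  let s0 : Q → P := Function.surjInv hg
  have hs0 : ∀ q, g (s0 q) = q := Function.surjInv_eq hg
  let B : Q →+ M →+ RTensor A P M ⧸ R :=
    AddMonoidHom.mk'
      (fun q => AddMonoidHom.mk'
        (fun m => QuotientAddGroup.mk' R (RTensor.mk A P M (s0 q) m))
        (fun m m' => by
          show QuotientAddGroup.mk' R (RTensor.mk A P M (s0 q) (m + m')) = _
          rw [RTensor.mk_add_right, map_add]))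
      (fun q q' => by
        ext m
        show QuotientAddGroup.mk' R (RTensor.mk A P M (s0 (q + q')) m) = _
        rw [key (s0 (q + q')) (s0 q + s0 q') m (by rw [hs0, map_add, hs0, hs0]),
          RTensor.mk_add_left, map_add]
        rfl)
  have hBbal : ∀ (a : A) (q : Q) (m : M),
      B (MulOpposite.op a • q) m = B q (a • m) := by
    intro a q m
    show QuotientAddGroup.mk' R (RTensor.mk A P M (s0 (MulOpposite.op a • q)) m) =
      QuotientAddGroup.mk' R (RTensor.mk A P M (s0 q) (a • m))
    rw [key (s0 (MulOpposite.op a • q)) (MulOpposite.op a • s0 q) m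
      (by rw [hs0, map_smul, hs0]), RTensor.mk_rel]
  have main : ∀ u : RTensor A P M,
      RTensor.lift B hBbal (RTensor.map (M := M) g u) = QuotientAddGroup.mk' R u := by
    intro u
    have := RTensor.hom_ext (M := M)
      (f₁ := (RTensor.lift B hBbal).comp (RTensor.map (M := M) g))
      (f₂ := QuotientAddGroup.mk' R)
      (by
        intro p m
        show RTensor.lift B hBbal (RTensor.map (M := M) g (RTensor.mk A P M p m)) = _
        rw [RTensor.map_mk, RTensor.lift_mk]
        exact key (s0 (g p)) p m (hs0 (g p)))
    exact congrArg (fun f => f u) this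
  have : QuotientAddGroup.mk' R t = 0 := by rw [← main t, ht, map_zero]
  obtain ⟨s, hs⟩ := (QuotientAddGroup.eq_zero_iff _).1 this
  exact ⟨s, hs⟩

end AuxExact

noncomputable section AuxEq
variable {A : Type u} [Ring A] {M : Type u} [AddCommGroup M] [Module A M]

/-- The coordinate evaluation map `(Fin n → A) ⊗_A M →+ M`. -/
def RTensor.coord {n : ℕ} (i₀ : Fin n) : RTensor A (Fin n → A) M →+ M :=
  RTensor.lift
    (AddMonoidHom.mk'
      (fun v => AddMonoidHom.mk' (fun m => v i₀ • m) (fun m m' => smul_add _ m m'))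
      (fun v w => by ext m; exact add_smul _ _ m))
    (by
      intro a v m
      show (MulOpposite.op a • v) i₀ • m = v i₀ • (a • m)
      rw [Pi.smul_apply, MulOpposite.smul_eq_mul_unop, MulOpposite.unop_op, mul_smul])

theorem RTensor.coord_mk {n : ℕ} (i₀ : Fin n) (v : Fin n → A) (m : M) :
    RTensor.coord (M := M) i₀ (RTensor.mk A (Fin n → A) M v m) = v i₀ • m :=
  RTensor.lift_mk _ _ v m

/-- The equational criterion for flatness: consequences of a single relation. -/
theorem IsFlatModule.eq_criterion (hflat : IsFlatModule A M) {n : ℕ}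
    (a : Fin n → A) (x : Fin n → M) (h : ∑ i, a i • x i = 0) :
    ∃ (m : ℕ) (b : Fin m → Fin n → A) (y : Fin m → M),
      (∀ i, x i = ∑ j, b j i • y j) ∧ (∀ j, ∑ i, a i * b j i = 0) := by
  classical
  -- the right-module map `π : Aⁿ → A`, `v ↦ ∑ aᵢ vᵢ`
  let π : (Fin n → A) →ₗ[Aᵐᵒᵖ] A :=
    { toFun := fun v => ∑ i, a i * v i
      map_add' := by
        intro v w; simp [mul_add, Finset.sum_add_distrib]
      map_smul' := by
        intro c v
        simp only [Pi.smul_apply, MulOpposite.smul_eq_mul_unop, RingHom.id_apply]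
        simp only [Finset.sum_mul, mul_assoc] }
  have hπ : ∀ v, π v = ∑ i, a i * v i := fun _ => rfl
  let T : RTensor A (Fin n → A) M :=
    ∑ i, RTensor.mk A (Fin n → A) M (Pi.single i 1) (x i)
  have hπsingle : ∀ i : Fin n, π (Pi.single i 1) = a i := by
    intro i
    rw [hπ]
    rw [Finset.sum_eq_single i (fun j _ hj => by
      rw [Pi.single_apply, if_neg hj, mul_zero]) (by simp)]
    simp
  have step1 : RTensor.map (M := M) π T = 0 := by
    rw [map_sum]
    have : ∀ i : Fin n, RTensor.map (M := M) π
        (RTensor.mk A (Fin n → A) M (Pi.single i 1) (x i)) =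
          RTensor.mk A A M 1 (a i • x i) := by
      intro i
      rw [RTensor.map_mk, hπsingle]
      have hrel := RTensor.mk_rel (P := A) (M := M) (a i) 1 (x i)
      rw [MulOpposite.smul_eq_mul_unop, MulOpposite.unop_op, one_mul] at hrel
      exact hrel
    rw [Finset.sum_congr rfl (fun i _ => this i)]
    have hsum : ∑ i, RTensor.mk A A M 1 (a i • x i)
        = RTensor.mkHom (A := A) (P := A) (M := M) (1 : A) (∑ i, a i • x i) := by
      rw [map_sum]
      rfl
    rw [hsum, h, map_zero]
  -- factor through the image
  have hcomp : (LinearMap.range π).subtype.comp π.rangeRestrict = π :=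
    LinearMap.subtype_comp_codRestrict _ _ _
  have step2 : RTensor.map (M := M) π.rangeRestrict T = 0 := by
    have hinj := hflat (↥(LinearMap.range π)) A (LinearMap.range π).subtype
      (Submodule.injective_subtype _)
    apply hinj
    rw [← RTensor.map_comp_apply, hcomp, step1, map_zero]
  obtain ⟨s, hs⟩ := RTensor.exact π.rangeRestrict (LinearMap.surjective_rangeRestrict π) T step2
  obtain ⟨m, k, y, rfl⟩ := RTensor.exists_sum s
  have hTsum : T = ∑ j, RTensor.mk A (Fin n → A) M ((k j : Fin n → A)) (y j) := by
    rw [← hs, map_sum]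
    exact Finset.sum_congr rfl fun j _ => by rw [RTensor.map_mk]; rfl
  refine ⟨m, fun j => (k j : Fin n → A), y, ?_, ?_⟩
  · intro i
    have h1 : RTensor.coord (M := M) i T = x i := by
      rw [map_sum]
      rw [Finset.sum_congr rfl (fun j _ => RTensor.coord_mk i _ _)]
      rw [Finset.sum_eq_single i (fun j _ hj => by
        rw [Pi.single_apply, if_neg (Ne.symm hj), zero_smul]) (by simp)]
      simp
    have h2 : RTensor.coord (M := M) i T = ∑ j, (k j : Fin n → A) i • y j := by
      rw [hTsum, map_sum]
      exact Finset.sum_congr rfl fun j _ => RTensor.coord_mk i _ _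
    rw [← h1, h2]
  · intro j
    have hker : π (k j : Fin n → A) = 0 := by
      have h0 : π.rangeRestrict (k j : Fin n → A) = 0 := LinearMap.mem_ker.1 (k j).2
      calc π (k j : Fin n → A)
          = (LinearMap.range π).subtype (π.rangeRestrict (k j : Fin n → A)) := by
            rw [← LinearMap.comp_apply, hcomp]
        _ = 0 := by rw [h0, map_zero]
    rw [← hπ]
    exact hker
end AuxEq

section AuxFactor
variable {A : Type u} [Ring A] {M : Type u} [AddCommGroup M] [Module A M]

/-- Factorization: a tuple in a flat module satisfying finitely many relations
factors through a tuple with no relations. -/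
theorem IsFlatModule.factor (hflat : IsFlatModule A M) (k : ℕ) :
    ∀ (n : ℕ) (r : Fin k → Fin n → A) (x : Fin n → M),
    (∀ j, ∑ i, r j i • x i = 0) →
    ∃ (m : ℕ) (b : Fin m → Fin n → A) (y : Fin m → M),
      (∀ i, x i = ∑ j, b j i • y j) ∧ (∀ j l, ∑ i, r j i * b l i = 0) := by
  induction k with
  | zero =>
      intro n r x _
      refine ⟨n, fun j i => if i = j then 1 else 0, x, ?_, fun j => j.elim0⟩
      intro i
      rw [Finset.sum_eq_single i (fun j _ hj => by
        simp [Ne.symm hj]) (by simp)]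
      simp
  | succ k ih =>
      intro n r x h
      obtain ⟨m₁, b₁, y₁, hx1, hrel1⟩ := hflat.eq_criterion (r 0) x (h 0)
      set r' : Fin k → Fin m₁ → A := fun j l => ∑ i, r j.succ i * b₁ l i with hr'
      have h' : ∀ j, ∑ l, r' j l • y₁ l = 0 := by
        intro j
        have e1 : ∀ l, r' j l • y₁ l = ∑ i, r j.succ i • (b₁ l i • y₁ l) := by
          intro l
          rw [hr']
          rw [Finset.sum_smul]
          exact Finset.sum_congr rfl fun i _ => (mul_smul _ _ _)
        rw [Finset.sum_congr rfl fun l _ => e1 l, Finset.sum_comm]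
        have e2 : ∀ i, ∑ l, r j.succ i • (b₁ l i • y₁ l) = r j.succ i • x i := by
          intro i
          rw [← Finset.smul_sum, ← hx1]
        rw [Finset.sum_congr rfl fun i _ => e2 i]
        exact h j.succ
      obtain ⟨m₂, b₂, y₂, hy1, hrel2⟩ := ih m₁ r' y₁ h'
      refine ⟨m₂, fun t i => ∑ l, b₁ l i * b₂ t l, y₂, ?_, ?_⟩
      · intro i
        rw [hx1 i]
        have e1 : ∀ l, b₁ l i • y₁ l = ∑ t, (b₁ l i * b₂ t l) • y₂ t := by
          intro l
          rw [hy1 l, Finset.smul_sum]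
          exact Finset.sum_congr rfl fun t _ => (smul_smul _ _ _)
        rw [Finset.sum_congr rfl fun l _ => e1 l, Finset.sum_comm]
        exact Finset.sum_congr rfl fun t _ => (Finset.sum_smul).symm
      · intro j t
        induction j using Fin.cases with
        | zero =>
            have e : ∀ i, r 0 i * ∑ l, b₁ l i * b₂ t l
                = ∑ l, (r 0 i * b₁ l i) * b₂ t l := by
              intro i
              rw [Finset.mul_sum]
              exact Finset.sum_congr rfl fun l _ => (mul_assoc _ _ _).symm
            rw [Finset.sum_congr rfl fun i _ => e i, Finset.sum_comm]
            have e2 : ∀ l, ∑ i, (r 0 i * b₁ l i) * b₂ t l = 0 := by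
              intro l
              rw [← Finset.sum_mul, hrel1 l, zero_mul]
            rw [Finset.sum_congr rfl fun l _ => e2 l, Finset.sum_const_zero]
        | succ j =>
            have e : ∀ i, r j.succ i * ∑ l, b₁ l i * b₂ t l
                = ∑ l, (r j.succ i * b₁ l i) * b₂ t l := by
              intro i
              rw [Finset.mul_sum]
              exact Finset.sum_congr rfl fun l _ => (mul_assoc _ _ _).symm
            rw [Finset.sum_congr rfl fun i _ => e i, Finset.sum_comm]
            have e2 : ∀ l, ∑ i, (r j.succ i * b₁ l i) * b₂ t l = r' j l * b₂ t l := by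
              intro l
              rw [← Finset.sum_mul]
            rw [Finset.sum_congr rfl fun l _ => e2 l]
            exact hrel2 j t
end AuxFactor

noncomputable section Chain
namespace CGL
variable {A : Type u} [Ring A] {M : Type u} [AddCommGroup M] [Module A M]
variable (r : ℕ → (ℕ →₀ A))

def bnd (k : ℕ) : ℕ := ((r k).support.sup id) + 1

def G (s : ℕ) : ℕ := (∑ k ∈ Finset.range s, bnd r k) + s + 1

theorem G_mono {s s' : ℕ} (h : s ≤ s') : G r s ≤ G r s' :=
  add_le_add (add_le_add
    (Finset.sum_le_sum_of_subset (Finset.range_subset_range.2 h)) h) le_rfl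

theorem lt_G (s : ℕ) : s < G r s := by
  unfold G; omega

theorem bnd_le_G {k s : ℕ} (h : k < s) : bnd r k ≤ G r s := by
  have h1 := Finset.single_le_sum (f := bnd r) (fun i _ => Nat.zero_le _)
    (Finset.mem_range.2 h)
  unfold G; omega

theorem r_apply_eq_zero {k s i : ℕ} (h : k < s) (hi : G r s ≤ i) : r k i = 0 := by
  by_contra hne
  have hmem : i ∈ (r k).support := Finsupp.mem_support_iff.2 hne
  have h2 : i ≤ (r k).support.sup id := Finset.le_sup (f := id) hmem
  have h3 := bnd_le_G r h
  unfold bnd at h3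
  omega

def ιV (s : ℕ) : (Fin (G r s) → A) →ₗ[A] (ℕ →₀ A) where
  toFun v := ∑ i : Fin (G r s), Finsupp.single i.1 (v i)
  map_add' v w := by
    rw [← Finset.sum_add_distrib]
    exact Finset.sum_congr rfl fun i _ => by rw [Pi.add_apply, Finsupp.single_add]
  map_smul' a v := by
    simp only [RingHom.id_apply]
    rw [Finset.smul_sum]
    exact Finset.sum_congr rfl fun i _ => by
      rw [Finsupp.smul_single, Pi.smul_apply]

def trV (s : ℕ) : (ℕ →₀ A) →ₗ[A] (Fin (G r s) → A) where
  toFun c i := c i.1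
  map_add' c d := by funext i; simp
  map_smul' a c := by funext i; simp

theorem trV_ιV (s : ℕ) (v : Fin (G r s) → A) : trV r s (ιV r s v) = v := by
  funext i
  show (∑ j : Fin (G r s), Finsupp.single j.1 (v j)) i.1 = v i
  rw [Finsupp.finset_sum_apply]
  rw [Finset.sum_eq_single i (fun j _ hj => by
    rw [Finsupp.single_apply, if_neg (Fin.val_injective.ne hj)]) (by simp)]
  rw [Finsupp.single_apply, if_pos rfl]

theorem ιV_apply_eq_zero (s : ℕ) (v : Fin (G r s) → A) {i : ℕ} (hi : G r s ≤ i) :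
    ιV r s v i = 0 := by
  show (∑ j : Fin (G r s), Finsupp.single j.1 (v j)) i = 0
  rw [Finsupp.finset_sum_apply]
  refine Finset.sum_eq_zero fun j _ => ?_
  rw [Finsupp.single_apply, if_neg (by omega)]

theorem ιV_trV (s : ℕ) (c : ℕ →₀ A) (hc : ∀ i, G r s ≤ i → c i = 0) :
    ιV r s (trV r s c) = c := by
  ext i
  show (∑ j : Fin (G r s), Finsupp.single j.1 (c j.1)) i = c i
  rw [Finsupp.finset_sum_apply]
  by_cases h : i < G r s
  · rw [Finset.sum_eq_single (⟨i, h⟩ : Fin (G r s)) (fun j _ hj => by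
      rw [Finsupp.single_apply, if_neg (Fin.val_injective.ne hj)]) (by simp)]
    rw [Finsupp.single_apply, if_pos rfl]
  · rw [Finset.sum_eq_zero fun j _ => by
      rw [Finsupp.single_apply, if_neg (by omega)]]
    rw [hc i (by omega)]

variable (Θ : (ℕ →₀ A) →ₗ[A] M)

def μ (s : ℕ) : (Fin (G r s) → A) →ₗ[A] M := Θ.comp (ιV r s)

def γ (s s' : ℕ) : (Fin (G r s) → A) →ₗ[A] (Fin (G r s') → A) :=
  (trV r s').comp (ιV r s)

def Rel (s : ℕ) : Submodule A (Fin (G r s) → A) :=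
  Submodule.span A ((fun k => trV r s (r k)) '' (Set.Iio s))

theorem ιV_trV_r {k s : ℕ} (h : k < s) : ιV r s (trV r s (r k)) = r k :=
  ιV_trV r s (r k) fun i hi => r_apply_eq_zero r h hi

theorem ιV_γ {s s' : ℕ} (h : s ≤ s') (v : Fin (G r s) → A) :
    ιV r s' (γ r s s' v) = ιV r s v :=
  ιV_trV r s' (ιV r s v) fun i hi =>
    ιV_apply_eq_zero r s v (le_trans (G_mono r h) hi)

theorem μ_γ {s s' : ℕ} (h : s ≤ s') (v : Fin (G r s) → A) :
    μ r Θ s' (γ r s s' v) = μ r Θ s v := by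
  show Θ (ιV r s' (γ r s s' v)) = Θ (ιV r s v)
  rw [ιV_γ r h]

theorem γ_self (s : ℕ) (v : Fin (G r s) → A) : γ r s s v = v := trV_ιV r s v

theorem γ_γ {s s' s'' : ℕ} (h : s ≤ s') (v : Fin (G r s) → A) :
    γ r s' s'' (γ r s s' v) = γ r s s'' v := by
  show trV r s'' (ιV r s' (γ r s s' v)) = trV r s'' (ιV r s v)
  rw [ιV_γ r h]

theorem γ_r {k s s' : ℕ} (hk : k < s) (h : s ≤ s') :
    γ r s s' (trV r s (r k)) = trV r s' (r k) := by
  show trV r s' (ιV r s (trV r s (r k))) = trV r s' (r k)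
  rw [ιV_trV_r r hk]

theorem γ_Rel {s s' : ℕ} (h : s ≤ s') {v : Fin (G r s) → A} (hv : v ∈ Rel r s) :
    γ r s s' v ∈ Rel r s' := by
  induction hv using Submodule.span_induction with
  | mem w hw =>
      obtain ⟨k, hk, rfl⟩ := hw
      rw [γ_r r hk h]
      exact Submodule.subset_span ⟨k, lt_of_lt_of_le hk h, rfl⟩
  | zero => rw [map_zero]; exact Submodule.zero_mem _
  | add w₁ w₂ _ _ h1 h2 => rw [map_add]; exact Submodule.add_mem _ h1 h2
  | smul a w _ h1 => rw [map_smul]; exact Submodule.smul_mem _ a h1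

theorem μ_Rel (hΘr : ∀ k, Θ (r k) = 0) {s : ℕ} {v : Fin (G r s) → A}
    (hv : v ∈ Rel r s) : μ r Θ s v = 0 := by
  induction hv using Submodule.span_induction with
  | mem w hw =>
      obtain ⟨k, hk, rfl⟩ := hw
      show Θ (ιV r s (trV r s (r k))) = 0
      rw [ιV_trV_r r hk]
      exact hΘr k
  | zero => exact map_zero _
  | add w₁ w₂ _ _ h1 h2 => rw [map_add, h1, h2, add_zero]
  | smul a w _ h1 => rw [map_smul, h1, smul_zero]

/-- Every stage element mapping to zero in `M` dies in the relation span of a later stage. -/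
theorem stage_ker (hker : ∀ c : ℕ →₀ A, Θ c = 0 →
      ∃ w : ℕ →₀ A, c = w.sum fun k a => a • r k)
    (s : ℕ) (v : Fin (G r s) → A) (hv : μ r Θ s v = 0) :
    ∃ N, s ≤ N ∧ γ r s N v ∈ Rel r N := by
  obtain ⟨w, hw⟩ := hker (ιV r s v) hv
  refine ⟨max s ((w.support.sup id) + 1), le_max_left _ _, ?_⟩
  set N := max s ((w.support.sup id) + 1) with hN
  show trV r N (ιV r s v) ∈ Rel r N
  rw [hw, map_finsuppSum]
  refine Submodule.finsuppSum_mem _ _ _ _ fun k hk => ?_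
  rw [map_smul]
  refine Submodule.smul_mem _ _ (Submodule.subset_span ⟨k, ?_, rfl⟩)
  have : k ≤ w.support.sup id := Finset.le_sup (f := id) (Finsupp.mem_support_iff.2 hk)
  show k < N
  omega

/-- Every element of `M` is hit by some stage. -/
theorem stage_surj (hsurj : Function.Surjective Θ) (m : M) :
    ∃ s v, μ r Θ s v = m := by
  obtain ⟨c, rfl⟩ := hsurj m
  refine ⟨(c.support.sup id) + 1, trV r _ c, ?_⟩
  show Θ (ιV r _ (trV r _ c)) = Θ c
  rw [ιV_trV r _ c fun i hi => ?_]
  by_contra hne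
  have hmem : i ∈ c.support := Finsupp.mem_support_iff.2 hne
  have h2 : i ≤ c.support.sup id := Finset.le_sup (f := id) hmem
  have h3 := lt_G r ((c.support.sup id) + 1)
  omega

theorem μ_apply (s : ℕ) (v : Fin (G r s) → A) :
    μ r Θ s v = ∑ i, v i • Θ (Finsupp.single i.1 1) := by
  show Θ (∑ i : Fin (G r s), Finsupp.single i.1 (v i)) = _
  rw [map_sum]
  refine Finset.sum_congr rfl fun i _ => ?_
  rw [← map_smul, Finsupp.smul_single, smul_eq_mul, mul_one]

end CGL
end Chain

noncomputable section StepSec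
namespace CGL
variable {A : Type u} [Ring A] {M : Type u} [AddCommGroup M] [Module A M]

theorem step (hflat : IsFlatModule A M) (r : ℕ → (ℕ →₀ A))
    (Θ : (ℕ →₀ A) →ₗ[A] M) (hΘr : ∀ k, Θ (r k) = 0)
    (hker : ∀ c : ℕ →₀ A, Θ c = 0 → ∃ w : ℕ →₀ A, c = w.sum fun k a => a • r k)
    (hsurj : Function.Surjective Θ) (s : ℕ) :
    ∃ (q : ℕ) (α : (Fin (G r s) → A) →ₗ[A] (Fin q → A))
      (μf : (Fin q → A) →ₗ[A] M) (N : ℕ)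
      (bb : (Fin q → A) →ₗ[A] (Fin (G r N) → A)),
      s < N ∧
      (∀ v, μf (α v) = μ r Θ s v) ∧
      (∀ v ∈ Rel r s, α v = 0) ∧
      (∀ w, μ r Θ N (bb w) = μf w) ∧
      (∀ v, bb (α v) - γ r s N v ∈ Rel r N) := by
  classical
  set xx : Fin (G r s) → M := fun i => Θ (Finsupp.single i.1 1) with hxx
  have hμ : ∀ v, μ r Θ s v = ∑ i, v i • xx i := fun v => μ_apply r Θ s v
  set rs : Fin s → Fin (G r s) → A := fun j => trV r s (r j.1) with hrs
  have hyprel : ∀ j, ∑ i, rs j i • xx i = 0 := by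
    intro j
    rw [← hμ (rs j)]
    show Θ (ιV r s (trV r s (r j.1))) = 0
    rw [ιV_trV_r r j.isLt]
    exact hΘr j.1
  obtain ⟨q, b, y, hxb, hbr⟩ := hflat.factor s (G r s) rs xx hyprel
  -- the maps
  set α : (Fin (G r s) → A) →ₗ[A] (Fin q → A) :=
    { toFun := fun v t => ∑ i, v i * b t i
      map_add' := fun v w => by
        funext t
        show ∑ i, (v i + w i) * b t i = (∑ i, v i * b t i) + ∑ i, w i * b t i
        rw [← Finset.sum_add_distrib]
        exact Finset.sum_congr rfl fun i _ => add_mul _ _ _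
      map_smul' := fun a v => by
        funext t
        show ∑ i, (a * v i) * b t i = a * ∑ i, v i * b t i
        rw [Finset.mul_sum]
        exact Finset.sum_congr rfl fun i _ => mul_assoc _ _ _ } with hα
  set μf : (Fin q → A) →ₗ[A] M :=
    { toFun := fun w => ∑ t, w t • y t
      map_add' := fun v w => by
        show ∑ t, (v t + w t) • y t = _
        rw [← Finset.sum_add_distrib]
        exact Finset.sum_congr rfl fun t _ => add_smul _ _ _
      map_smul' := fun a w => by
        show ∑ t, (a * w t) • y t = a • ∑ t, w t • y t
        rw [Finset.smul_sum]
        exact Finset.sum_congr rfl fun t _ => mul_smul _ _ _ } with hμf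
  have hμfα : ∀ v, μf (α v) = μ r Θ s v := by
    intro v
    show ∑ t, (∑ i, v i * b t i) • y t = _
    rw [hμ v]
    have e1 : ∀ t, (∑ i, v i * b t i) • y t = ∑ i, v i • (b t i • y t) := by
      intro t
      rw [Finset.sum_smul]
      exact Finset.sum_congr rfl fun i _ => mul_smul _ _ _
    rw [Finset.sum_congr rfl fun t _ => e1 t, Finset.sum_comm]
    refine Finset.sum_congr rfl fun i _ => ?_
    rw [← Finset.smul_sum, ← hxb i]
  have hαRel : ∀ v ∈ Rel r s, α v = 0 := by
    intro v hv
    induction hv using Submodule.span_induction with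
    | mem w hw =>
        obtain ⟨k, hk, rfl⟩ := hw
        funext t
        exact hbr ⟨k, hk⟩ t
    | zero => exact map_zero _
    | add w₁ w₂ _ _ e1 e2 => rw [map_add, e1, e2, add_zero]
    | smul a w _ e1 => rw [map_smul, e1, smul_zero]
  -- lift the free generators back to stage vectors
  have hy : ∀ t, ∃ c : ℕ →₀ A, Θ c = y t := fun t => hsurj (y t)
  choose c hc using hy
  set N₁ : ℕ := max (s + 1) ((Finset.univ.sup fun t => (c t).support.sup id) + 1) with hN₁
  have hcz : ∀ t i, G r N₁ ≤ i → c t i = 0 := by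
    intro t i hi
    by_contra hne
    have hmem : i ∈ (c t).support := Finsupp.mem_support_iff.2 hne
    have h2 : i ≤ (c t).support.sup id := Finset.le_sup (f := id) hmem
    have h3 : (c t).support.sup id ≤ Finset.univ.sup fun t => (c t).support.sup id :=
      Finset.le_sup (f := fun t => (c t).support.sup id) (Finset.mem_univ t)
    have h4 := lt_G r N₁
    omega
  set bb0 : (Fin q → A) →ₗ[A] (Fin (G r N₁) → A) :=
    { toFun := fun w i => ∑ t, w t * c t i.1
      map_add' := fun v w => by
        funext i
        show ∑ t, (v t + w t) * c t i.1 = (∑ t, v t * c t i.1) + ∑ t, w t * c t i.1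
        rw [← Finset.sum_add_distrib]
        exact Finset.sum_congr rfl fun t _ => add_mul _ _ _
      map_smul' := fun a w => by
        funext i
        show ∑ t, (a * w t) * c t i.1 = a * ∑ t, w t * c t i.1
        rw [Finset.mul_sum]
        exact Finset.sum_congr rfl fun t _ => mul_assoc _ _ _ } with hbb0
  have hbb0μ : ∀ w, μ r Θ N₁ (bb0 w) = μf w := by
    intro w
    have e0 : bb0 w = trV r N₁ (∑ t, w t • c t) := by
      funext i
      show ∑ t, w t * c t i.1 = (∑ t, w t • c t) i.1
      rw [Finsupp.finset_sum_apply]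
      exact Finset.sum_congr rfl fun t _ => by rw [Finsupp.smul_apply, smul_eq_mul]
    have e1 : ιV r N₁ (bb0 w) = ∑ t, w t • c t := by
      rw [e0]
      refine ιV_trV r N₁ _ fun i hi => ?_
      rw [Finsupp.finset_sum_apply]
      exact Finset.sum_eq_zero fun t _ => by
        rw [Finsupp.smul_apply, hcz t i hi, smul_zero]
    show Θ (ιV r N₁ (bb0 w)) = μf w
    rw [e1, map_sum]
    exact Finset.sum_congr rfl fun t _ => by rw [map_smul, hc t]
  -- the defect and its eventual death
  set δ : (Fin (G r s) → A) →ₗ[A] (Fin (G r N₁) → A) :=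
    bb0.comp α - γ r s N₁ with hδ
  have hsN₁ : s ≤ N₁ := le_trans (Nat.le_succ s) (le_max_left _ _)
  have hδμ : ∀ v, μ r Θ N₁ (δ v) = 0 := by
    intro v
    show μ r Θ N₁ (bb0 (α v) - γ r s N₁ v) = 0
    rw [map_sub, hbb0μ, hμfα, μ_γ r Θ hsN₁, sub_self]
  have hδstage := fun p : Fin (G r s) => stage_ker r Θ hker N₁ (δ (Pi.single p 1)) (hδμ _)
  choose Np hNp1 hNp2 using hδstage
  set N : ℕ := max N₁ (Finset.univ.sup Np) with hN
  have hN₁N : N₁ ≤ N := le_max_left _ _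
  have hNpN : ∀ p, Np p ≤ N :=
    fun p => le_trans (Finset.le_sup (Finset.mem_univ p)) (le_max_right _ _)
  have hδN : ∀ p : Fin (G r s), γ r N₁ N (δ (Pi.single p 1)) ∈ Rel r N := by
    intro p
    rw [← γ_γ r (hNp1 p) (δ (Pi.single p 1))]
    exact γ_Rel r (hNpN p) (hNp2 p)
  have hδNall : ∀ v, γ r N₁ N (δ v) ∈ Rel r N := by
    intro v
    have hv : v = ∑ p, v p • (Pi.single p 1 : Fin (G r s) → A) := by
      funext i
      rw [Finset.sum_apply]
      rw [Finset.sum_eq_single i (fun p _ hp => by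
        rw [Pi.smul_apply, Pi.single_apply, if_neg (Ne.symm hp), smul_zero]) (by simp)]
      rw [Pi.smul_apply, Pi.single_apply, if_pos rfl, smul_eq_mul, mul_one]
    rw [hv, map_sum, map_sum]
    exact Submodule.sum_mem _ fun p _ => by
      rw [map_smul, map_smul]
      exact Submodule.smul_mem _ _ (hδN p)
  refine ⟨q, α, μf, N, (γ r N₁ N).comp bb0, lt_of_lt_of_le (Nat.lt_of_lt_of_le (Nat.lt_succ_self s) (le_max_left _ _)) hN₁N, hμfα, hαRel, ?_, ?_⟩
  · intro w
    show μ r Θ N (γ r N₁ N (bb0 w)) = μf w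
    rw [μ_γ r Θ hN₁N, hbb0μ]
  · intro v
    have e1 : (γ r N₁ N).comp bb0 (α v) - γ r s N v = γ r N₁ N (δ v) := by
      show γ r N₁ N (bb0 (α v)) - γ r s N v = γ r N₁ N (bb0 (α v) - γ r s N₁ v)
      rw [map_sub, γ_γ r hsN₁]
    rw [e1]
    exact hδNall v

end CGL
end StepSec

/-- **Countable Govorov–Lazard theorem.**  Every countably presentable flat module over an
associative ring `A` is the colimit of a countable directed chain of finitely generated
free `A`-modules. -/
theorem countably_presentable_flat_is_countable_directed_colimit_of_fg_free
    (A : Type u) [Ring A] (M : Type u) [AddCommGroup M] [Module A M]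
    (hflat : IsFlatModule A M) (hcp : CountablyPresentable A M) :
    ∃ (P : ℕ → ModuleCat.{u} A)
      (f : ∀ n m : ℕ, n ≤ m → P n →ₗ[A] P m),
      (∀ n, Module.Free A (P n)) ∧ (∀ n, Module.Finite A (P n)) ∧
      (∀ (n : ℕ) (h : n ≤ n), f n n h = LinearMap.id) ∧
      (∀ (n m k : ℕ) (hnm : n ≤ m) (hmk : m ≤ k),
        (f m k hmk).comp (f n m hnm) = f n k (hnm.trans hmk)) ∧
      Nonempty (Module.DirectLimit (fun n => P n) f ≃ₗ[A] M) := by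
  classical
  obtain ⟨fp, ⟨e⟩⟩ := hcp
  set Θ : (ℕ →₀ A) →ₗ[A] M := (e : ((ℕ →₀ A) ⧸ LinearMap.range fp) →ₗ[A] M).comp
    (LinearMap.range fp).mkQ with hΘdef
  set r : ℕ → (ℕ →₀ A) := fun k => fp (Finsupp.single k 1) with hrdef
  have hsurjΘ : Function.Surjective Θ :=
    e.surjective.comp (Submodule.mkQ_surjective _)
  have hΘr : ∀ k, Θ (r k) = 0 := by
    intro k
    show e ((LinearMap.range fp).mkQ (fp (Finsupp.single k 1))) = 0
    have h0 : (LinearMap.range fp).mkQ (fp (Finsupp.single k 1)) = 0 := by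
      rw [Submodule.mkQ_apply]
      exact (Submodule.Quotient.mk_eq_zero _).2 ⟨Finsupp.single k 1, rfl⟩
    rw [h0, map_zero]
  have hker : ∀ c : ℕ →₀ A, Θ c = 0 → ∃ w : ℕ →₀ A, c = w.sum fun k a => a • r k := by
    intro c hc
    have h0 : (LinearMap.range fp).mkQ c = 0 := by
      apply e.injective
      rw [map_zero]
      exact hc
    rw [Submodule.mkQ_apply] at h0
    obtain ⟨w, rfl⟩ := (Submodule.Quotient.mk_eq_zero _).1 h0
    refine ⟨w, ?_⟩
    conv_lhs => rw [← Finsupp.sum_single w]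
    rw [map_finsuppSum]
    refine Finsupp.sum_congr fun k _ => ?_
    show fp (Finsupp.single k (w k)) = w k • fp (Finsupp.single k 1)
    rw [← map_smul, Finsupp.smul_single, smul_eq_mul, mul_one]
  choose q α μf N bb hlt h1 h2 h3 h4 using CGL.step hflat r Θ hΘr hker hsurjΘ
  -- the chain of stage indices
  set n : ℕ → ℕ := fun j => Nat.rec 0 (fun _ s => N s) j with hn
  have hnsucc : ∀ j, n (j + 1) = N (n j) := fun j => rfl
  have hnstrict : StrictMono n := strictMono_nat_of_lt_succ (fun j => hlt (n j))
  have hnmono : ∀ {j k : ℕ}, j ≤ k → n j ≤ n k := fun h => hnstrict.monotone h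
  have hjn : ∀ j, j ≤ n j := fun j => hnstrict.le_apply
  -- the chain of free modules
  set P : ℕ → ModuleCat.{u} A := fun j => ModuleCat.of A (Fin (q (n j)) → A) with hP
  set t : ∀ j, P j →ₗ[A] P (j + 1) :=
    fun j => (α (n (j + 1))).comp (bb (n j)) with ht
  set f : ∀ j k, j ≤ k → (P j →ₗ[A] P k) :=
    fun j k h => Nat.leRecOn h (fun {k'} g => (t k').comp g) LinearMap.id with hf
  have hfself : ∀ j (h : j ≤ j), f j j h = LinearMap.id := fun j h => Nat.leRecOn_self _
  have hfsucc : ∀ j k (h : j ≤ k) (h' : j ≤ k + 1),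
      f j (k + 1) h' = (t k).comp (f j k h) := fun j k h h' => Nat.leRecOn_succ h _
  have hftrans : ∀ j k l (h1 : j ≤ k) (h2 : k ≤ l),
      (f k l h2).comp (f j k h1) = f j l (h1.trans h2) := by
    intro j k l h1 h2
    induction l, h2 using Nat.le_induction with
    | base => rw [hfself]; ext v; rfl
    | succ l hl ih =>
        rw [hfsucc k l hl, LinearMap.comp_assoc, ih,
          hfsucc j l (h1.trans hl) (h1.trans (hl.trans (Nat.le_succ l)))]
  set μP : ∀ j, P j →ₗ[A] M := fun j => μf (n j) with hμP
  have hμPt : ∀ j (v : P j), μP (j + 1) (t j v) = μP j v := by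
    intro j v
    show μf (n (j + 1)) (α (n (j + 1)) (bb (n j) v)) = μf (n j) v
    rw [h1 (n (j + 1)) (bb (n j) v)]
    exact h3 (n j) v
  have hμPf : ∀ j k (h : j ≤ k) (v : P j), μP k (f j k h v) = μP j v := by
    intro j k h v
    induction k, h using Nat.le_induction with
    | base => rw [hfself]; rfl
    | succ k hk ih =>
        rw [hfsucc j k hk]
        show μP (k + 1) (t k (f j k hk v)) = μP j v
        rw [hμPt k (f j k hk v)]
        exact ih
  set L : Module.DirectLimit (fun j => P j) f →ₗ[A] M :=
    Module.DirectLimit.lift A ℕ (fun j => P j) f μP (fun i j hij v => hμPf i j hij v)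
    with hL
  have hsurL : Function.Surjective L := by
    intro m
    obtain ⟨s, v, hv⟩ := CGL.stage_surj r Θ hsurjΘ m
    refine ⟨Module.DirectLimit.of A ℕ (fun j => P j) f s
      (α (n s) (CGL.γ r s (n s) v)), ?_⟩
    rw [hL, Module.DirectLimit.lift_of]
    show μf (n s) (α (n s) (CGL.γ r s (n s) v)) = m
    rw [h1, CGL.μ_γ r Θ (hjn s), hv]
  have hinjL : ∀ z, L z = 0 → z = 0 := by
    intro z hz
    obtain ⟨j, v, rfl⟩ := Module.DirectLimit.exists_of z
    rw [hL, Module.DirectLimit.lift_of] at hz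
    have hw₀ : CGL.μ r Θ (n (j + 1)) (bb (n j) v) = 0 := by
      show CGL.μ r Θ (N (n j)) (bb (n j) v) = 0
      rw [h3 (n j) v]
      exact hz
    obtain ⟨N₀, hN₀1, hN₀2⟩ := CGL.stage_ker r Θ hker (n (j + 1)) (bb (n j) v) hw₀
    have inv : ∀ k (hk : j ≤ k),
        bb (n k) (f j k hk v) - CGL.γ r (n (j + 1)) (n (k + 1)) (bb (n j) v)
          ∈ CGL.Rel r (n (k + 1)) := by
      intro k hk
      induction k, hk using Nat.le_induction with
      | base =>
          rw [hfself]
          show bb (n j) v - CGL.γ r (n (j + 1)) (n (j + 1)) (bb (n j) v)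
            ∈ CGL.Rel r (n (j + 1))
          rw [CGL.γ_self, sub_self]
          exact Submodule.zero_mem _
      | succ k hk ih =>
          have m1 := h4 (n (k + 1)) (bb (n k) (f j k hk v))
          have m2 := CGL.γ_Rel r (hnmono (Nat.le_succ (k + 1))) ih
          rw [map_sub, CGL.γ_γ r (hnmono (Nat.succ_le_succ hk))] at m2
          have m3 := Submodule.add_mem _ m1 m2
          rw [sub_add_sub_cancel] at m3
          rw [hfsucc j k hk]
          exact m3
    set k : ℕ := max j N₀ with hk
    have hk1 : j ≤ k := le_max_left _ _
    have hk2 : N₀ ≤ n (k + 1) := by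
      have := hjn (k + 1)
      have : k + 1 ≤ n (k + 1) := hjn (k + 1)
      have : N₀ ≤ k := le_max_right _ _
      omega
    have h5 : CGL.γ r (n (j + 1)) (n (k + 1)) (bb (n j) v) ∈ CGL.Rel r (n (k + 1)) := by
      rw [← CGL.γ_γ r hN₀1 (bb (n j) v)]
      exact CGL.γ_Rel r hk2 hN₀2
    have h6 : bb (n k) (f j k hk1 v) ∈ CGL.Rel r (n (k + 1)) := by
      have := Submodule.add_mem _ (inv k hk1) h5
      rwa [sub_add_cancel] at this
    have h7 : f j (k + 1) (hk1.trans (Nat.le_succ k)) v = 0 := by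
      rw [hfsucc j k hk1]
      show α (n (k + 1)) (bb (n k) (f j k hk1 v)) = 0
      exact h2 (n (k + 1)) _ h6
    calc Module.DirectLimit.of A ℕ (fun j => P j) f j v
        = Module.DirectLimit.of A ℕ (fun j => P j) f (k + 1)
            (f j (k + 1) (hk1.trans (Nat.le_succ k)) v) := (Module.DirectLimit.of_f).symm
      _ = 0 := by rw [h7, map_zero]
  refine ⟨P, f, ?_, ?_, hfself, fun a b c hab hbc => hftrans a b c hab hbc, ?_⟩
  · intro j
    exact inferInstanceAs (Module.Free A (Fin (q (n j)) → A))
  · intro j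
    exact inferInstanceAs (Module.Finite A (Fin (q (n j)) → A))
  · exact ⟨LinearEquiv.ofBijective L ⟨(injective_iff_map_eq_zero L).2 hinjL, hsurL⟩⟩
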